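/- arXiv:2404.10117 — 2 statements merged into one kernel-verified Lean document; each statement's English description precedes it below -/
import Mathlib

section
/- Let k ≥ 2 be an integer and let t > 0 be a real number. Then the complex number (e^{iπ/k} + 2t e^{iπ/(2k)} + t²)^k has strictly positive imaginary part; consequently 1 + (e^{iπ/k} + 2t e^{iπ/(2k)} + t²)^k does not lie on the nonpositive real axis (−∞, 0]. -/
open Complex

/-- For an integer `k ≥ 2` and a real `t > 0`, the number
`(e^{iπ/k} + 2t e^{iπ/(2k)} + t²)^k` has strictly positive imaginary part;
consequently `1 + (e^{iπ/k} + 2t e^{iπ/(2k)} + t²)^k` avoids the cut `(−∞, 0]`,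
i.e. it lies in the slit plane. -/
theorem one_dim_case_avoids_cut
    (k : ℕ) (hk : 2 ≤ k) (t : ℝ) (ht : 0 < t) :
    0 < (((Complex.exp (Real.pi * I / k) + 2 * t * Complex.exp (Real.pi * I / (2 * k))
          + (t : ℂ) ^ 2)) ^ k).im ∧
      (1 + ((Complex.exp (Real.pi * I / k) + 2 * t * Complex.exp (Real.pi * I / (2 * k))
          + (t : ℂ) ^ 2)) ^ k) ∈ Complex.slitPlane := by
  have hkR : (2:ℝ) ≤ (k:ℝ) := by exact_mod_cast hk
  have hk0 : (0:ℝ) < (k:ℝ) := by linarith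
  have hkC : (k:ℂ) ≠ 0 := by exact_mod_cast (by positivity : (k:ℝ) ≠ 0)
  set θ : ℝ := Real.pi / (2 * k) with hθdef
  have hθpos : 0 < θ := by positivity
  have hθlt : θ < Real.pi / 2 := by
    rw [hθdef, div_lt_div_iff₀ (by positivity) (by norm_num)]
    nlinarith [Real.pi_pos]
  have hcos : 0 < Real.cos θ := Real.cos_pos_of_mem_Ioo ⟨by linarith, hθlt⟩
  have hsin : 0 < Real.sin θ := Real.sin_pos_of_pos_of_lt_pi hθpos
    (by linarith [Real.pi_pos])
  set α : ℝ := Real.arctan (Real.sin θ / (Real.cos θ + t)) with hαdef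
  have hαpos : 0 < α := by
    rw [hαdef, ← Real.arctan_zero]
    exact Real.arctan_strictMono (by positivity)
  have hαlt : α < θ := by
    have h1 : Real.sin θ / (Real.cos θ + t) < Real.tan θ := by
      rw [Real.tan_eq_sin_div_cos]
      exact div_lt_div_of_pos_left hsin hcos (by linarith)
    calc α < Real.arctan (Real.tan θ) := Real.arctan_strictMono h1
      _ = θ := Real.arctan_tan (by linarith) hθlt
  have hcα : 0 < Real.cos α := Real.cos_arctan_pos _
  set ρ : ℝ := (Real.cos θ + t) / Real.cos α with hρdef
  have hρ : 0 < ρ := by positivity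
  -- polar form
  have hz : Complex.exp ((θ:ℂ) * I) + (t:ℂ) = (ρ:ℂ) * Complex.exp ((α:ℂ) * I) := by
    apply Complex.ext
    · simp only [Complex.add_re, Complex.exp_ofReal_mul_I_re, Complex.ofReal_re,
        Complex.mul_re, Complex.ofReal_im, Complex.exp_ofReal_mul_I_im]
      rw [hρdef]
      field_simp
      ring
    · simp only [Complex.add_im, Complex.exp_ofReal_mul_I_im, Complex.ofReal_im,
        Complex.mul_im, Complex.ofReal_re, Complex.exp_ofReal_mul_I_re]
      have htan : Real.sin α / Real.cos α = Real.sin θ / (Real.cos θ + t) := by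
        rw [← Real.tan_eq_sin_div_cos, hαdef, Real.tan_arctan]
      rw [hρdef]
      field_simp
      field_simp at htan
      linarith [htan]
  have hE : Complex.exp (Real.pi * I / k) + 2 * t * Complex.exp (Real.pi * I / (2 * k))
      + (t : ℂ) ^ 2 = (Complex.exp ((θ:ℂ) * I) + (t:ℂ)) ^ 2 := by
    have h1 : (Real.pi : ℂ) * I / (2 * k) = (θ:ℂ) * I := by
      rw [hθdef]; push_cast; field_simp
    have h2 : (Real.pi : ℂ) * I / k = (θ:ℂ) * I + (θ:ℂ) * I := by
      rw [hθdef]; push_cast; field_simp; ring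
    rw [h1, h2, Complex.exp_add]
    ring
  have hpow : ((Complex.exp (Real.pi * I / k) + 2 * t * Complex.exp (Real.pi * I / (2 * k))
      + (t : ℂ) ^ 2)) ^ k = ((ρ ^ (2 * k) : ℝ) : ℂ) * Complex.exp (((2 * k * α : ℝ) : ℂ) * I) := by
    rw [hE, hz, ← pow_mul, mul_pow, ← Complex.exp_nat_mul]
    push_cast
    ring_nf
  have hsin2 : 0 < Real.sin (2 * k * α) := by
    apply Real.sin_pos_of_pos_of_lt_pi (by positivity)
    have : 2 * (k:ℝ) * α < 2 * k * θ := by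
      nlinarith
    rw [hθdef] at this
    calc 2 * (k:ℝ) * α < 2 * k * (Real.pi / (2 * k)) := this
      _ = Real.pi := by field_simp
  have him : 0 < (((Complex.exp (Real.pi * I / k) + 2 * t * Complex.exp (Real.pi * I / (2 * k))
      + (t : ℂ) ^ 2)) ^ k).im := by
    rw [hpow]
    simp only [Complex.mul_im, Complex.ofReal_re, Complex.ofReal_im,
      Complex.exp_ofReal_mul_I_im, Complex.exp_ofReal_mul_I_re, zero_mul, add_zero]
    positivity
  refine ⟨him, ?_⟩
  rw [Complex.mem_slitPlane_iff]
  right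
  simp only [Complex.add_im, Complex.one_im, zero_add]
  exact him.ne'
end

section
/- Let k ≥ 1 be an integer, let β > 1 be a real number with 2β ∉ ℤ, let c ≠ 0 be real, and let δ ∈ (0, 1). Then there exist no open interval I containing 1 and real analytic functions a, b : I → ℝ such that c(1 − y^{2k})^{2β} = a(y)(1 − y^{2k})^β + b(y) for all y ∈ (1 − δ, 1). -/
open Filter Topology Real

private lemma aux_t_pos : ∀ᶠ y in 𝓝[<] (1:ℝ), 0 < 1 - y := by
  filter_upwards [self_mem_nhdsWithin] with y hy
  simp only [Set.mem_Iio] at hy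
  linarith

private lemma aux_tendsto_zero {α : ℝ} (hα : 0 < α) :
    Tendsto (fun y : ℝ => (1 - y) ^ α) (𝓝[<] (1:ℝ)) (𝓝 0) := by
  have h1 : Tendsto (fun y : ℝ => 1 - y) (𝓝[<] (1:ℝ)) (𝓝 0) := by
    have hc : Continuous (fun y : ℝ => 1 - y) := continuous_const.sub continuous_id
    have h := (hc.tendsto (1:ℝ)).mono_left (nhdsWithin_le_nhds (s := Set.Iio (1:ℝ)))
    simpa using h
  have h2 : ContinuousAt (fun x : ℝ => x ^ α) 0 :=
    Real.continuousAt_rpow_const 0 α (Or.inr hα.le)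
  have h3 := h2.tendsto.comp h1
  simpa [Real.zero_rpow hα.ne', Function.comp_def] using h3

private lemma aux_eq_zero {α L : ℝ} (hL : L ≠ 0)
    (h : Tendsto (fun y : ℝ => (1 - y) ^ α) (𝓝[<] (1:ℝ)) (𝓝 L)) : α = 0 := by
  by_contra hα
  rcases lt_or_gt_of_ne hα with hneg | hpos
  · have hpos' : 0 < -α := by linarith
    have h2 := aux_tendsto_zero hpos'
    have h3 : Tendsto (fun y : ℝ => (1-y)^α * (1-y)^(-α)) (𝓝[<] (1:ℝ)) (𝓝 (L * 0)) := h.mul h2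
    have h4 : Tendsto (fun _ : ℝ => (1:ℝ)) (𝓝[<] (1:ℝ)) (𝓝 (L * 0)) := by
      apply h3.congr'
      filter_upwards [aux_t_pos] with y hy
      rw [← Real.rpow_add hy]
      simp
    have h5 := tendsto_nhds_unique h4 tendsto_const_nhds
    simp at h5
  · have h2 := aux_tendsto_zero hpos
    exact hL (tendsto_nhds_unique h h2)

private lemma aux_key {f : ℝ → ℝ} {α γ L M : ℝ} (hL : L ≠ 0) (hM : M ≠ 0)
    (h1 : Tendsto (fun y => f y * (1 - y) ^ (-α)) (𝓝[<] (1:ℝ)) (𝓝 L))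
    (h2 : Tendsto (fun y => f y * (1 - y) ^ (-γ)) (𝓝[<] (1:ℝ)) (𝓝 M)) : α = γ := by
  have h3 : Tendsto (fun y => (f y * (1-y)^(-α)) * (f y * (1-y)^(-γ))⁻¹)
      (𝓝[<] (1:ℝ)) (𝓝 (L * M⁻¹)) := h1.mul (h2.inv₀ hM)
  have hf0 : ∀ᶠ y in 𝓝[<] (1:ℝ), f y ≠ 0 := by
    filter_upwards [h1.eventually_ne hL] with y hy
    intro h0; exact hy (by simp [h0])
  have h4 : Tendsto (fun y : ℝ => (1-y) ^ (γ - α)) (𝓝[<] (1:ℝ)) (𝓝 (L * M⁻¹)) := by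
    apply h3.congr'
    filter_upwards [aux_t_pos, hf0] with y ht hf
    have hne : (1-y) ≠ 0 := ne_of_gt ht
    have e1 : ((1-y:ℝ)^(-γ))⁻¹ = (1-y)^γ := by rw [Real.rpow_neg ht.le, inv_inv]
    rw [mul_inv, e1]
    have e2 : f y * (1-y)^(-α) * ((f y)⁻¹ * (1-y)^γ) =
        (f y * (f y)⁻¹) * ((1-y)^(-α) * (1-y)^γ) := by ring
    rw [e2, mul_inv_cancel₀ hf, one_mul, ← Real.rpow_add ht, show -α + γ = γ - α by ring]
  have h5 := aux_eq_zero (mul_ne_zero hL (inv_ne_zero hM)) h4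
  linarith

private lemma aux_rep {f h : ℝ → ℝ} {n : ℕ} (hh : ContinuousAt h 1)
    (hfe : ∀ᶠ y in 𝓝 (1:ℝ), f y = (y - 1)^n * h y) :
    Tendsto (fun y => f y * (1-y)^(-(n:ℝ))) (𝓝[<] (1:ℝ)) (𝓝 ((-1)^n * h 1)) := by
  have h1 : Tendsto (fun y => (-1:ℝ)^n * h y) (𝓝[<] (1:ℝ)) (𝓝 ((-1)^n * h 1)) :=
    (tendsto_const_nhds.mul hh.tendsto).mono_left nhdsWithin_le_nhds
  apply h1.congr'
  filter_upwards [hfe.filter_mono nhdsWithin_le_nhds, aux_t_pos] with y hy ht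
  rw [hy]
  have hs : (y - 1 : ℝ)^n = (-1)^n * (1-y)^n := by
    rw [← neg_pow]; ring_nf
  have h2 : (1-y:ℝ)^n * (1-y)^(-(n:ℝ)) = 1 := by
    rw [← Real.rpow_natCast (1-y) n, ← Real.rpow_add ht]
    simp
  calc (-1:ℝ)^n * h y = (-1)^n * h y * ((1-y:ℝ)^n * (1-y)^(-(n:ℝ))) := by rw [h2, mul_one]
    _ = (y-1)^n * h y * (1-y)^(-(n:ℝ)) := by rw [hs]; ring

private lemma aux_final {f : ℝ → ℝ} {α L : ℝ} (hL : L ≠ 0) (hf : AnalyticAt ℝ f 1)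
    (h : Tendsto (fun y => f y * (1 - y) ^ (-α)) (𝓝[<] (1:ℝ)) (𝓝 L)) : ∃ n : ℕ, α = n := by
  have hnz : ¬ ∀ᶠ z in 𝓝 (1:ℝ), f z = 0 := by
    intro hz
    have h0 : Tendsto (fun _ : ℝ => (0:ℝ)) (𝓝[<] (1:ℝ)) (𝓝 L) := by
      apply h.congr'
      filter_upwards [hz.filter_mono nhdsWithin_le_nhds] with y hy
      simp [hy]
    exact hL (tendsto_nhds_unique h0 tendsto_const_nhds)
  obtain ⟨n, g, hg, hg1, hge⟩ := hf.exists_eventuallyEq_pow_smul_nonzero_iff.mpr hnz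
  have hge' : ∀ᶠ y in 𝓝 (1:ℝ), f y = (y - 1)^n * g y := by
    filter_upwards [hge] with y hy
    simpa [smul_eq_mul] using hy
  have hT := aux_rep hg.continuousAt hge'
  have hA : ((-1:ℝ)^n * g 1) ≠ 0 := mul_ne_zero (pow_ne_zero _ (by norm_num)) hg1
  exact ⟨n, aux_key hL hA h hT⟩

private lemma rpadd {t : ℝ} (ht : 0 < t) (p q r : ℝ) (h : p + q = r) : t^p * t^q = t^r := by
  rw [← Real.rpow_add ht, h]

/-- **Order-matching contradiction, case `2β ∉ ℤ`.** For an integer `k ≥ 1`, a real `β > 1`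
with `2β ∉ ℤ`, a real `c ≠ 0` and `δ ∈ (0,1)`, there are no functions `a, b` real analytic
on an open interval around `1` such that
`c(1 − y^{2k})^{2β} = a(y)(1 − y^{2k})^β + b(y)` for all `y ∈ (1 − δ, 1)`. -/
theorem gmq_no_analytic_identity_irrational_case
    (k : ℕ) (hk : 1 ≤ k) (β : ℝ) (hβ : 1 < β) (hβ2 : ∀ m : ℤ, 2 * β ≠ m)
    (c : ℝ) (hc : c ≠ 0) (δ : ℝ) (hδ : δ ∈ Set.Ioo (0 : ℝ) 1) :
    ¬ ∃ (l r : ℝ) (a b : ℝ → ℝ), l < 1 ∧ 1 < r ∧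
        (∀ y ∈ Set.Ioo l r, AnalyticAt ℝ a y) ∧
        (∀ y ∈ Set.Ioo l r, AnalyticAt ℝ b y) ∧
        ∀ y ∈ Set.Ioo (1 - δ) 1,
          c * (1 - y ^ (2 * k)) ^ (2 * β) =
            a y * (1 - y ^ (2 * k)) ^ β + b y := by
  rintro ⟨l, r, a, b, hl, hr, hA, hB, hid⟩
  obtain ⟨hδ0, hδ1⟩ := hδ
  have ha1 : AnalyticAt ℝ a 1 := hA 1 ⟨hl, hr⟩
  have hb1 : AnalyticAt ℝ b 1 := hB 1 ⟨hl, hr⟩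
  set F := 𝓝[<] (1:ℝ) with hF
  have hIoo : ∀ᶠ y in F, y ∈ Set.Ioo (1-δ) 1 := by
    have h1 : Set.Ioi (1-δ) ∈ 𝓝 (1:ℝ) := Ioi_mem_nhds (by linarith)
    filter_upwards [nhdsWithin_le_nhds h1, self_mem_nhdsWithin] with y hy1 hy2
    exact ⟨hy1, hy2⟩
  set v : ℝ → ℝ := fun y => ∑ i ∈ Finset.range (2*k), y^i with hv
  have hu : ∀ y : ℝ, 1 - y^(2*k) = (1-y) * v y := by
    intro y
    have h := geom_sum_mul y (2*k)
    simp only [hv]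
    linear_combination h
  have hv1 : v 1 = 2*k := by simp [hv]
  have hvc : ContinuousAt v 1 :=
    (continuous_finset_sum _ (fun i _ => continuous_pow i)).continuousAt
  have hkpos : (0:ℝ) < 2*k := by
    have : (1:ℝ) ≤ (k:ℝ) := by exact_mod_cast hk
    linarith
  have hvF : Tendsto v F (𝓝 ((2*k:ℕ):ℝ)) := by
    have := hvc.tendsto.mono_left (nhdsWithin_le_nhds (s := Set.Iio (1:ℝ)))
    rw [hv1] at this
    exact_mod_cast this
  have hk' : (((2*k:ℕ)):ℝ) = 2*(k:ℝ) := by push_cast; ring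
  have hvpos : ∀ᶠ y in F, 0 < v y :=
    hvF.eventually (eventually_gt_nhds (by rw [hk']; linarith))
  have hrp : ∀ p : ℝ, Tendsto (fun y => (v y)^p) F (𝓝 ((2*(k:ℝ))^p)) := by
    intro p
    have hcp : ContinuousAt (fun x : ℝ => x ^ p) (2*(k:ℝ)) :=
      Real.continuousAt_rpow_const _ _ (Or.inl (by linarith))
    have := hcp.tendsto.comp (by rwa [hk'] at hvF)
    simpa [Function.comp_def] using this
  have hvβ := hrp β
  have hv2β := hrp (2*β)
  have hid' : ∀ᶠ y in F, c * (1 - y^(2*k))^(2*β) = a y * (1 - y^(2*k))^β + b y := by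
    filter_upwards [hIoo] with y hy
    exact hid y hy
  have h2kβ : (0:ℝ) < (2*(k:ℝ))^(2*β) := Real.rpow_pos_of_pos (by linarith) _
  have h2kβ' : (0:ℝ) < (2*(k:ℝ))^β := Real.rpow_pos_of_pos (by linarith) _
  by_cases haz : ∀ᶠ z in 𝓝 (1:ℝ), a z = 0
  · -- a vanishes near 1 : b ~ c (1-y)^{2β}
    have hbT : Tendsto (fun y => b y * (1-y)^(-(2*β))) F (𝓝 (c * (2*(k:ℝ))^(2*β))) := by
      apply (tendsto_const_nhds.mul hv2β).congr'
      filter_upwards [hid', aux_t_pos, hvpos, haz.filter_mono nhdsWithin_le_nhds]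
        with y hy ht hv0 ha0
      have hb : b y = c * ((1-y)^(2*β) * (v y)^(2*β)) := by
        rw [hu y, Real.mul_rpow ht.le hv0.le, ha0] at hy
        linarith
      have e1 : (1-y)^(2*β) * (1-y)^(-(2*β)) = 1 := by
        rw [rpadd ht _ _ 0 (by ring), Real.rpow_zero]
      rw [hb]
      linear_combination (-(c * (v y)^(2*β))) * e1
    obtain ⟨m, hm⟩ := aux_final (mul_ne_zero hc h2kβ.ne') hb1 hbT
    exact hβ2 m (by exact_mod_cast hm)
  · obtain ⟨n, g, hg, hg1, hge⟩ := ha1.exists_eventuallyEq_pow_smul_nonzero_iff.mpr haz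
    have hge' : ∀ᶠ y in 𝓝 (1:ℝ), a y = (y - 1)^n * g y := by
      filter_upwards [hge] with y hy
      simpa [smul_eq_mul] using hy
    have hTa := aux_rep hg.continuousAt hge'
    have hAne : ((-1:ℝ)^n * g 1) ≠ 0 := mul_ne_zero (pow_ne_zero _ (by norm_num)) hg1
    have hβn : ((n:ℝ)) ≠ β := by
      intro h
      exact hβ2 (2*n) (by push_cast; linarith)
    rcases lt_or_gt_of_ne hβn with hlt | hgt
    · -- n < β : b has order n + β
      have hbT : Tendsto (fun y => b y * (1-y)^(-((n:ℝ)+β))) F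
          (𝓝 (c * (2*(k:ℝ))^(2*β) * 0 - ((-1:ℝ)^n * g 1) * (2*(k:ℝ))^β)) := by
        apply (((tendsto_const_nhds.mul hv2β).mul
          (aux_tendsto_zero (show (0:ℝ) < β - n by linarith))).sub (hTa.mul hvβ)).congr'
        filter_upwards [hid', aux_t_pos, hvpos] with y hy ht hv0
        have hb : b y = c * ((1-y)^(2*β) * (v y)^(2*β))
            - a y * ((1-y)^β * (v y)^β) := by
          rw [hu y, Real.mul_rpow ht.le hv0.le, Real.mul_rpow ht.le hv0.le] at hy
          linarith
        have f1 : (1-y)^(2*β) * (1-y)^(-((n:ℝ)+β)) = (1-y)^(β - n) :=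
          rpadd ht _ _ _ (by ring)
        have f2 : (1-y)^β * (1-y)^(-((n:ℝ)+β)) = (1-y)^(-(n:ℝ)) :=
          rpadd ht _ _ _ (by ring)
        rw [hb]
        linear_combination (-(c * (v y)^(2*β))) * f1 + (a y * (v y)^β) * f2
      obtain ⟨m, hm⟩ := aux_final (by
        simp only [mul_zero, zero_sub, ne_eq, neg_eq_zero]
        exact mul_ne_zero hAne h2kβ'.ne') hb1 hbT
      exact hβ2 (2*m - 2*n) (by push_cast; linarith)
    · -- β < n : b has order 2β
      have hbT : Tendsto (fun y => b y * (1-y)^(-(2*β))) F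
          (𝓝 (c * (2*(k:ℝ))^(2*β) - ((-1:ℝ)^n * g 1) * (2*(k:ℝ))^β * 0)) := by
        apply ((tendsto_const_nhds.mul hv2β).sub ((hTa.mul hvβ).mul
          (aux_tendsto_zero (show (0:ℝ) < (n:ℝ) - β by linarith)))).congr'
        filter_upwards [hid', aux_t_pos, hvpos] with y hy ht hv0
        have hb : b y = c * ((1-y)^(2*β) * (v y)^(2*β))
            - a y * ((1-y)^β * (v y)^β) := by
          rw [hu y, Real.mul_rpow ht.le hv0.le, Real.mul_rpow ht.le hv0.le] at hy
          linarith
        have e1 : (1-y)^(2*β) * (1-y)^(-(2*β)) = 1 := by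
          rw [rpadd ht _ _ 0 (by ring), Real.rpow_zero]
        have e2a : (1-y)^β * (1-y)^(-(2*β)) = (1-y)^(-β) :=
          rpadd ht _ _ _ (by ring)
        have e2b : (1-y)^(-(n:ℝ)) * (1-y)^((n:ℝ) - β) = (1-y)^(-β) :=
          rpadd ht _ _ _ (by ring)
        rw [hb]
        linear_combination (-(c * (v y)^(2*β))) * e1 + (a y * (v y)^β) * e2a
          - (a y * (v y)^β) * e2b
      obtain ⟨m, hm⟩ := aux_final (by
        simp only [mul_zero, sub_zero]
        exact mul_ne_zero hc h2kβ.ne') hb1 hbT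
      exact hβ2 m (by exact_mod_cast hm)
end
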